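/- For every complex number s with s² + d·s ≠ 0, every complex z with k·z² = s² + d·s, and assuming η ≠ 0, the functions f₁, f₂ : ℝ → ℂ defined by f₁(x) = (1/(s² + d·s))·(1 − cosh(z·x) + (β₁/η)·sinh(z·x)) and f₂(x) = (1/(s² + d·s))·(1 − cosh(z·(ℓ − x)) + (β₂/η)·sinh(z·(ℓ − x))) are twice differentiable on ℝ and satisfy, for every x ∈ ℝ, k·f₁''(x) = (s² + d·s)·f₁(x) − 1 and k·f₂''(x) = (s² + d·s)·f₂(x) − 1; in particular both branches of the uniform-forcing displacement transfer function of Theorem 3.1 satisfy the Laplace-domain ODE (s² + d·s)·Q = k·Q_xx + 1 on (0, 𝔭) ∪ (𝔭, ℓ). -/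
import Mathlib

private lemma affine_hasDerivAt (a b : ℂ) (x : ℝ) :
    HasDerivAt (fun x : ℝ => a + b * (x : ℂ)) b x := by
  have h := Complex.ofRealCLM.hasDerivAt (x := x)
  simpa using (h.const_mul b).const_add a

private lemma ode_aux (K S c r a b : ℂ) (hc : c = 1 / S) (hS : S ≠ 0)
    (hb2 : K * b ^ 2 = S) (f : ℝ → ℂ)
    (hf : f = fun x : ℝ =>
      c * (1 - Complex.cosh (a + b * (x : ℂ)) + r * Complex.sinh (a + b * (x : ℂ)))) :
    Differentiable ℝ f ∧ Differentiable ℝ (deriv f) ∧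
      ∀ x : ℝ, K * deriv (deriv f) x = S * f x - 1 := by
  have hD1 : ∀ x : ℝ, HasDerivAt f
      (c * (-(Complex.sinh (a + b * x) * b) + r * (Complex.cosh (a + b * x) * b))) x := by
    intro x
    have hw := affine_hasDerivAt a b x
    have hch := (Complex.hasDerivAt_cosh (a + b * x)).comp x hw
    have hsh := (Complex.hasDerivAt_sinh (a + b * x)).comp x hw
    have := (((hasDerivAt_const x (1 : ℂ)).sub hch).add (hsh.const_mul r)).const_mul c
    simpa [hf, sub_eq_add_neg] using this
  have hderiv1 : deriv f = fun x : ℝ =>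
      c * (-(Complex.sinh (a + b * x) * b) + r * (Complex.cosh (a + b * x) * b)) :=
    funext fun x => (hD1 x).deriv
  have hD2 : ∀ x : ℝ, HasDerivAt (deriv f)
      (c * (-(Complex.cosh (a + b * x) * b * b) + r * (Complex.sinh (a + b * x) * b * b))) x := by
    intro x
    have hw := affine_hasDerivAt a b x
    have hch := (Complex.hasDerivAt_cosh (a + b * x)).comp x hw
    have hsh := (Complex.hasDerivAt_sinh (a + b * x)).comp x hw
    have := (((hsh.mul_const b).neg).add ((hch.mul_const b).const_mul r)).const_mul c
    rw [hderiv1]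
    exact this
  refine ⟨fun x => (hD1 x).differentiableAt, fun x => (hD2 x).differentiableAt, fun x => ?_⟩
  have hSc : S * c = 1 := by rw [hc]; field_simp
  rw [(hD2 x).deriv, hf]
  simp only
  linear_combination c * (r * Complex.sinh (a + b * x) - Complex.cosh (a + b * x)) * hb2 - hSc


/-- Both branches of the uniform-forcing displacement transfer function satisfy the
Laplace-domain ODE `(s² + d·s)·Q = k·Q_xx + 1`. -/
theorem uniform_forcing_branches_satisfy_ode
    (ℓ k d p g : ℝ) (hℓ : 0 < ℓ) (hk : 0 < k) (hd : 0 < d)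
    (hp0 : 0 < p) (hpℓ : p < ℓ) (hg : 0 ≤ g)
    (s z : ℂ) (hs : s ^ 2 + (d : ℂ) * s ≠ 0)
    (hz : (k : ℂ) * z ^ 2 = s ^ 2 + (d : ℂ) * s)
    (β₁ β₂ η : ℂ)
    (hβ₁ : β₁ = 2 * (k : ℂ) * z * Complex.sinh (z * (ℓ : ℂ) / 2) ^ 2 +
      2 * (g : ℂ) * s * Complex.sinh (z * ((ℓ : ℂ) - (p : ℂ))) *
        Complex.sinh (z * (p : ℂ) / 2) ^ 2)
    (hβ₂ : β₂ = 2 * (k : ℂ) * z * Complex.sinh (z * (ℓ : ℂ) / 2) ^ 2 +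
      2 * (g : ℂ) * s * Complex.sinh (z * (p : ℂ)) *
        Complex.sinh (z * ((ℓ : ℂ) - (p : ℂ)) / 2) ^ 2)
    (hη : η = (k : ℂ) * z * Complex.sinh (z * (ℓ : ℂ)) +
      (g : ℂ) * s * Complex.sinh (z * (p : ℂ)) * Complex.sinh (z * ((ℓ : ℂ) - (p : ℂ))))
    (hη0 : η ≠ 0)
    (f₁ f₂ : ℝ → ℂ)
    (hf₁ : f₁ = fun x : ℝ => (1 / (s ^ 2 + (d : ℂ) * s)) *
      (1 - Complex.cosh (z * (x : ℂ)) + (β₁ / η) * Complex.sinh (z * (x : ℂ))))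
    (hf₂ : f₂ = fun x : ℝ => (1 / (s ^ 2 + (d : ℂ) * s)) *
      (1 - Complex.cosh (z * ((ℓ : ℂ) - (x : ℂ))) +
        (β₂ / η) * Complex.sinh (z * ((ℓ : ℂ) - (x : ℂ))))) :
    (Differentiable ℝ f₁ ∧ Differentiable ℝ (deriv f₁) ∧
      ∀ x : ℝ, (k : ℂ) * deriv (deriv f₁) x = (s ^ 2 + (d : ℂ) * s) * f₁ x - 1) ∧
    (Differentiable ℝ f₂ ∧ Differentiable ℝ (deriv f₂) ∧
      ∀ x : ℝ, (k : ℂ) * deriv (deriv f₂) x = (s ^ 2 + (d : ℂ) * s) * f₂ x - 1) := by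
  constructor
  · refine ode_aux (k : ℂ) (s ^ 2 + (d : ℂ) * s) _ (β₁ / η) 0 z rfl hs hz f₁ ?_
    funext x
    rw [hf₁]
    norm_num
  · refine ode_aux (k : ℂ) (s ^ 2 + (d : ℂ) * s) _ (β₂ / η) (z * (ℓ : ℂ)) (-z) rfl hs
      (by rw [← hz]; ring) f₂ ?_
    funext x
    rw [hf₂]
    have harg : z * ((ℓ : ℂ) - (x : ℂ)) = z * (ℓ : ℂ) + (-z) * (x : ℂ) := by ring
    simp only [harg]
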